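/- Let r > 0 and a0 ≥ 0 with 2a0 + 2r < 1, and let c(w) = w^3 - 2a0 w - 2r. Then c has exactly one positive real root w0, and 0 < w0 < 1. Moreover: (i) if 8a0^3 < 27r^2, then w0 is the only real root of c and the other two roots are non-real complex conjugates of each other lying in the open unit disk; (ii) if 8a0^3 > 27r^2, then c has three distinct real roots w1 < w2 < w0 with -1 < w1 < w2 < 0; (iii) if 8a0^3 = 27r^2, then c has the simple root w0 ∈ (0,1) and a real double root lying in (-1, 0). -/

import Mathlib

noncomputable section

open Complex

/-- The real cubic `c(w) = w^3 - 2 a0 w - 2 r` whose roots are the critical points of `h`. -/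
def cubicR (r a0 w : ℝ) : ℝ := w^3 - 2*a0*w - 2*r

/-- The same cubic, as a function of a complex variable. -/
def cubicC (r a0 : ℝ) (w : ℂ) : ℂ := w^3 - 2*(a0:ℂ)*w - 2*(r:ℂ)

set_option maxHeartbeats 1600000 in
/-- Location of the critical points of `h`: under `r > 0`, `a0 ≥ 0`, `2a0 + 2r < 1`,
the cubic `c` has exactly one positive real root `w0 ∈ (0,1)`; moreover:
(i) in the three-cut case `8a0^3 < 27r^2`, `w0` is the only real root and the other two
roots are non-real complex conjugates in the open unit disk;
(ii) in the one-cut case `8a0^3 > 27r^2`, there are three distinct real roots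
`w1 < w2 < w0` with `-1 < w1 < w2 < 0`;
(iii) on the critical curve `8a0^3 = 27r^2`, `c` has a real double root in `(-1, 0)`. -/
theorem location_of_critical_points (r a0 : ℝ) (hr : 0 < r) (ha : 0 ≤ a0)
    (h : 2*a0 + 2*r < 1) :
    ∃ w0 : ℝ, 0 < w0 ∧ w0 < 1 ∧ cubicR r a0 w0 = 0 ∧
      (∀ w : ℝ, 0 < w → cubicR r a0 w = 0 → w = w0) ∧
      (8*a0^3 < 27*r^2 →
        (∀ w : ℝ, cubicR r a0 w = 0 → w = w0) ∧
        ∃ z : ℂ, z.im ≠ 0 ∧ ‖z‖ < 1 ∧ cubicC r a0 z = 0 ∧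
          cubicC r a0 ((starRingEnd ℂ) z) = 0 ∧
          (∀ u : ℂ, cubicC r a0 u = 0 → u = (w0:ℂ) ∨ u = z ∨ u = (starRingEnd ℂ) z)) ∧
      (8*a0^3 > 27*r^2 →
        ∃ w1 w2 : ℝ, -1 < w1 ∧ w1 < w2 ∧ w2 < 0 ∧
          cubicR r a0 w1 = 0 ∧ cubicR r a0 w2 = 0) ∧
      (8*a0^3 = 27*r^2 →
        ∃ wd : ℝ, -1 < wd ∧ wd < 0 ∧ cubicR r a0 wd = 0 ∧
          deriv (cubicR r a0) wd = 0) := by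
  -- existence of a root in (0,1) by IVT
  obtain ⟨s, hsmem, hcs⟩ : ∃ s ∈ Set.Ioo (0:ℝ) 1, cubicR r a0 s = 0 := by
    have hcont : ContinuousOn (cubicR r a0) (Set.Icc 0 1) := by
      apply Continuous.continuousOn
      unfold cubicR
      continuity
    have hmem : (0:ℝ) ∈ Set.Ioo (cubicR r a0 0) (cubicR r a0 1) := by
      unfold cubicR
      constructor <;> [nlinarith; nlinarith]
    obtain ⟨s, hs, hcs⟩ := intermediate_value_Ioo (by norm_num : (0:ℝ) ≤ 1) hcont hmem
    exact ⟨s, hs, hcs⟩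
  obtain ⟨hs0, hs1⟩ := hsmem
  have hs : s^3 = 2*a0*s + 2*r := by
    unfold cubicR at hcs; linarith
  -- s^2 > 2*a0
  have hs2 : 2*a0 < s^2 := by nlinarith [mul_pos hs0 hr]
  -- the sign identity
  have hkey : (3*r - a0*s) * (9*r^2*s + 3*r*a0*s^2 + 2*r*a0^2) = s*r*(27*r^2 - 8*a0^3) := by
    linear_combination (-3*r*a0^2) * hs
  have hP : 0 < 9*r^2*s + 3*r*a0*s^2 + 2*r*a0^2 := by
    nlinarith [mul_pos (mul_pos hr hr) hs0, mul_nonneg (mul_nonneg hr.le ha) (sq_nonneg s),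
      mul_nonneg hr.le (mul_nonneg ha ha)]
  -- s > 2r
  have hs2r : 2*r < s := by
    nlinarith [mul_pos hr hs0, mul_pos hr hr, mul_pos (mul_pos hr hr) hr, sq_nonneg (2*r + s)]
  -- uniqueness among positive roots
  have huniq : ∀ w : ℝ, 0 < w → cubicR r a0 w = 0 → w = s := by
    intro w hw hcw
    unfold cubicR at hcw
    have hfac : (w - s) * (w^2 + s*w + s^2 - 2*a0) = 0 := by
      linear_combination hcw - hs
    have hQ : 0 < w^2 + s*w + s^2 - 2*a0 := by
      nlinarith [mul_pos hw hs0, sq_nonneg w]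
    have := mul_eq_zero.mp hfac
    rcases this with h1 | h2
    · linarith
    · linarith
  refine ⟨s, hs0, hs1, hcs, huniq, ?_, ?_, ?_⟩
  · -- three-cut case
    intro hlt
    have h3r : a0*s < 3*r := by
      by_contra hc
      push_neg at hc
      have h1 : (3*r - a0*s) * (9*r^2*s + 3*r*a0*s^2 + 2*r*a0^2) ≤ 0 :=
        mul_nonpos_iff.mpr (Or.inr ⟨by linarith, hP.le⟩)
      rw [hkey] at h1
      have h2 : 0 < s*r*(27*r^2 - 8*a0^3) := mul_pos (mul_pos hs0 hr) (by linarith)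
      linarith
    have h3 : 8*a0 < 3*s^2 := by nlinarith [mul_pos hs0 hs0]
    set q : ℝ := Real.sqrt (3*s^2 - 8*a0) with hqdef
    have hq : q^2 = 3*s^2 - 8*a0 := Real.sq_sqrt (by linarith)
    have hqpos : 0 < q := Real.sqrt_pos.mpr (by linarith)
    have hsC : (s:ℂ)^3 = 2*(a0:ℂ)*(s:ℂ) + 2*(r:ℂ) := by exact_mod_cast congrArg (Complex.ofReal) hs
    have hqC : (q:ℂ)^2 = 3*(s:ℂ)^2 - 8*(a0:ℂ) := by exact_mod_cast congrArg (Complex.ofReal) hq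
    constructor
    · intro w hcw
      unfold cubicR at hcw
      have hfac : (w - s) * (w^2 + s*w + s^2 - 2*a0) = 0 := by
        linear_combination hcw - hs
      have hQ : 0 < w^2 + s*w + s^2 - 2*a0 := by
        nlinarith [sq_nonneg (2*w + s)]
      rcases mul_eq_zero.mp hfac with h1 | h2
      · linarith
      · linarith
    · refine ⟨-(s:ℂ)/2 + (q:ℂ)/2 * Complex.I, ?_, ?_, ?_, ?_, ?_⟩
      · simp
        positivity
      · have hnsq : Complex.normSq (-(s:ℂ)/2 + (q:ℂ)/2 * Complex.I) = s^2 - 2*a0 := by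
          simp [Complex.normSq_apply]
          nlinarith [hq]
        have habs2 : (‖(-(s:ℂ)/2 + (q:ℂ)/2 * Complex.I)‖)^2 = s^2 - 2*a0 := by
          rw [Complex.sq_norm, hnsq]
        have hlt1 : s^2 - 2*a0 < 1 := by nlinarith
        nlinarith [norm_nonneg (-(s:ℂ)/2 + (q:ℂ)/2 * Complex.I), habs2]
      · unfold cubicC
        linear_combination hsC + ((-(s:ℂ)/2 + (q:ℂ)/2 * Complex.I - s)*(q:ℂ)^2/4) * Complex.I_sq
          - ((-(s:ℂ)/2 + (q:ℂ)/2 * Complex.I - s)/4) * hqC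
      · have hconj : (starRingEnd ℂ) (-(s:ℂ)/2 + (q:ℂ)/2 * Complex.I)
            = -(s:ℂ)/2 - (q:ℂ)/2 * Complex.I := by
          simp [map_add, map_div₀, map_mul, map_ofNat, Complex.conj_I]
          ring
        rw [hconj]
        unfold cubicC
        linear_combination hsC + ((-(s:ℂ)/2 - (q:ℂ)/2 * Complex.I - s)*(q:ℂ)^2/4) * Complex.I_sq
          - ((-(s:ℂ)/2 - (q:ℂ)/2 * Complex.I - s)/4) * hqC
      · intro u hu
        have hconj : (starRingEnd ℂ) (-(s:ℂ)/2 + (q:ℂ)/2 * Complex.I)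
            = -(s:ℂ)/2 - (q:ℂ)/2 * Complex.I := by
          simp [map_add, map_div₀, map_mul, map_ofNat, Complex.conj_I]
          ring
        rw [hconj]
        unfold cubicC at hu
        have hfac : (u - (s:ℂ)) * ((u - (-(s:ℂ)/2 + (q:ℂ)/2 * Complex.I))
            * (u - (-(s:ℂ)/2 - (q:ℂ)/2 * Complex.I))) = 0 := by
          linear_combination hu - hsC - ((u - (s:ℂ))*(q:ℂ)^2/4) * Complex.I_sq
            + ((u - (s:ℂ))/4) * hqC
        rcases mul_eq_zero.mp hfac with h1 | h2
        · left; linear_combination h1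
        · rcases mul_eq_zero.mp h2 with h3 | h4
          · right; left; linear_combination h3
          · right; right; linear_combination h4
  · -- one-cut case
    intro hgt
    have h3r : 3*r < a0*s := by
      by_contra hc
      push_neg at hc
      have h1 : 0 ≤ (3*r - a0*s) * (9*r^2*s + 3*r*a0*s^2 + 2*r*a0^2) :=
        mul_nonneg (by linarith) hP.le
      rw [hkey] at h1
      have h2 : s*r*(27*r^2 - 8*a0^3) < 0 :=
        mul_neg_of_pos_of_neg (mul_pos hs0 hr) (by linarith)
      linarith
    have h3 : 3*s^2 < 8*a0 := by nlinarith [mul_pos hs0 hs0]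
    set q : ℝ := Real.sqrt (8*a0 - 3*s^2) with hqdef
    have hq : q^2 = 8*a0 - 3*s^2 := Real.sq_sqrt (by linarith)
    have hqpos : 0 < q := Real.sqrt_pos.mpr (by linarith)
    have hqs : q < s := by nlinarith
    refine ⟨(-s - q)/2, (-s + q)/2, by linarith, by linarith, by linarith, ?_, ?_⟩
    · unfold cubicR
      linear_combination hs + (((-s - q)/2 - s)/4) * hq
    · unfold cubicR
      linear_combination hs + (((-s + q)/2 - s)/4) * hq
  · -- critical curve case
    intro heq
    have ha0 : 0 < a0 := by
      rcases lt_or_eq_of_le ha with h1 | h2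
      · exact h1
      · exfalso; nlinarith [hr]
    have h3r : a0*s = 3*r := by
      have := hkey
      rw [heq] at this
      simp at this
      rcases this with h1 | h2
      · linarith
      · linarith [hP]
    have h3 : 3*s^2 = 8*a0 := by
      have hz : s*(3*s^2 - 8*a0) = 0 := by linear_combination 3*hs - 2*h3r
      rcases mul_eq_zero.mp hz with h1 | h2
      · exact absurd h1 (ne_of_gt hs0)
      · linarith
    refine ⟨-s/2, by linarith, by linarith, ?_, ?_⟩
    · unfold cubicR
      linear_combination hs + ((-s/2 - s)/4) * h3
    · have hd : HasDerivAt (cubicR r a0) (3*(-s/2)^2 - 2*a0) (-s/2) := by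
        have h1 : HasDerivAt (fun w : ℝ => w^3 - 2*a0*w - 2*r) (3*(-s/2)^2 - 2*a0) (-s/2) := by
          have := ((hasDerivAt_pow 3 (-s/2)).sub ((hasDerivAt_id (-s/2)).const_mul (2*a0))).sub_const (2*r)
          exact this.congr_deriv (by norm_num)
        exact h1
      rw [hd.deriv]
      nlinarith [h3]
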